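/- arXiv:0802.2322 — 2 statements merged into one kernel-verified Lean document; each statement's English description precedes it below -/
import Mathlib

section
/- The function θ_C(x) := inf_{c∈C}(f(x+c) − f(c)) is convex if and only if C is a singleton. -/
open scoped RealInnerProductSpace Pointwise

/-- `θ_C(x) = inf_{c ∈ C, x+c ∈ dom f}(f(x+c) − f(c))`, the finite part of
`x ↦ inf_{c∈C}(f(x+c) − f(c))`. -/
noncomputable def thetaC {J : ℕ} (f : EuclideanSpace ℝ (Fin J) → ℝ)
    (domf C : Set (EuclideanSpace ℝ (Fin J))) (x : EuclideanSpace ℝ (Fin J)) : ℝ :=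
  sInf ((fun c => f (x + c) - f c) '' {c ∈ C | x + c ∈ domf})

/-- Derivative of `f` along a line, from the gradient. -/
lemma hasDerivAt_line_aux {J : ℕ} {f : EuclideanSpace ℝ (Fin J) → ℝ}
    {p x : EuclideanSpace ℝ (Fin J)} (hp : HasGradientAt f p x)
    (v : EuclideanSpace ℝ (Fin J)) :
    HasDerivAt (fun t : ℝ => f (x + t • v)) ⟪p, v⟫ 0 := by
  have hcurve : HasDerivAt (fun t : ℝ => x + t • v) v 0 := by
    simpa using ((hasDerivAt_id (0 : ℝ)).smul_const v).const_add x
  have h0 : x + (0 : ℝ) • v = x := by simp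
  have hfd : HasFDerivAt f (InnerProductSpace.toDual ℝ _ p) ((fun t : ℝ => x + t • v) 0) := by
    simpa [h0] using hp.hasFDerivAt
  have := hfd.comp_hasDerivAt 0 hcurve
  exact this

/-- First-order convexity inequality. -/
lemma grad_ineq_aux {J : ℕ} {f : EuclideanSpace ℝ (Fin J) → ℝ}
    {domf : Set (EuclideanSpace ℝ (Fin J))} (hconv : ConvexOn ℝ domf f)
    {x y p : EuclideanSpace ℝ (Fin J)} (hx : x ∈ domf) (hy : y ∈ domf)
    (hp : HasGradientAt f p x) :
    f x + ⟪p, y - x⟫ ≤ f y := by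
  set φ : ℝ → ℝ := fun t => f (x + t • (y - x)) with hφ
  have hline : HasDerivAt φ ⟪p, y - x⟫ 0 := hasDerivAt_line_aux hp (y - x)
  have hslope : Filter.Tendsto (slope φ 0) (nhdsWithin 0 {(0 : ℝ)}ᶜ) (nhds ⟪p, y - x⟫) :=
    hasDerivAt_iff_tendsto_slope.mp hline
  have hmono : nhdsWithin (0 : ℝ) (Set.Ioi 0) ≤ nhdsWithin 0 {(0 : ℝ)}ᶜ :=
    nhdsWithin_mono 0 (fun t ht => ne_of_gt ht)
  have hslope' : Filter.Tendsto (slope φ 0) (nhdsWithin (0 : ℝ) (Set.Ioi 0))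
      (nhds ⟪p, y - x⟫) := hslope.mono_left hmono
  have hbound : ∀ᶠ t in nhdsWithin (0 : ℝ) (Set.Ioi 0), slope φ 0 t ≤ f y - f x := by
    filter_upwards [Ioo_mem_nhdsGT_of_mem (Set.mem_Ico.mpr ⟨le_refl (0 : ℝ), one_pos⟩)]
      with t ht
    obtain ⟨ht0, ht1⟩ := ht
    have he : (1 - t) • x + t • y = x + t • (y - x) := by
      rw [sub_smul, one_smul, smul_sub]; abel
    have hcv := hconv.2 hx hy (by linarith : (0:ℝ) ≤ 1 - t) (le_of_lt ht0) (by ring)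
    rw [he] at hcv
    have hφ0 : φ 0 = f x := by simp [hφ]
    have hφt : φ t ≤ (1 - t) * f x + t * f y := by simpa [smul_eq_mul] using hcv
    rw [slope_def_field, hφ0, sub_zero]
    rw [div_le_iff₀ ht0]
    nlinarith
  have := le_of_tendsto hslope' hbound
  linarith

/-- Injectivity of the gradient on the interior, from strict convexity. -/
lemma grad_inj_aux {J : ℕ} {f : EuclideanSpace ℝ (Fin J) → ℝ}
    {domf U : Set (EuclideanSpace ℝ (Fin J))} (hdom : U = interior domf)
    (hconv : ConvexOn ℝ domf f) (hsconv : StrictConvexOn ℝ U f)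
    {c1 c2 p : EuclideanSpace ℝ (Fin J)} (h1 : c1 ∈ U) (h2 : c2 ∈ U)
    (hg1 : HasGradientAt f p c1) (hg2 : HasGradientAt f p c2) : c1 = c2 := by
  by_contra hne
  have hsubU : U ⊆ domf := by rw [hdom]; exact interior_subset
  set m : EuclideanSpace ℝ (Fin J) := (1/2 : ℝ) • c1 + (1/2 : ℝ) • c2 with hm
  have hmU : m ∈ U := hsconv.1 h1 h2 (by norm_num) (by norm_num) (by norm_num)
  have hstrict := hsconv.2 h1 h2 hne (by norm_num : (0:ℝ) < 1/2) (by norm_num : (0:ℝ) < 1/2)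
    (by norm_num)
  have i1 := grad_ineq_aux hconv (hsubU h1) (hsubU hmU) hg1
  have i2 := grad_ineq_aux hconv (hsubU h2) (hsubU hmU) hg2
  have hsum : (m - c1) + (m - c2) = 0 := by
    rw [hm]; module
  have hinner : ⟪p, m - c1⟫ + ⟪p, m - c2⟫ = 0 := by
    rw [← inner_add_right, hsum, inner_zero_right]
  have hstrict' : f m < (1/2 : ℝ) * f c1 + (1/2 : ℝ) * f c2 := by
    rw [← hm] at hstrict
    simpa [smul_eq_mul] using hstrict
  linarith

/-- `θ_C` is convex (as an extended-real-valued function, i.e. convex on its domain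
`dom f − C`) if and only if `C` is a singleton. -/
theorem thetaC_convex_iff_singleton {J : ℕ}
    (f : EuclideanSpace ℝ (Fin J) → ℝ)
    (domf : Set (EuclideanSpace ℝ (Fin J))) (U : Set (EuclideanSpace ℝ (Fin J)))
    (hdom : U = interior domf) (hUne : U.Nonempty)
    (hconv : ConvexOn ℝ domf f) (hsconv : StrictConvexOn ℝ U f)
    (f' : EuclideanSpace ℝ (Fin J) → EuclideanSpace ℝ (Fin J))
    (hf' : ∀ y ∈ U, HasGradientAt f (f' y) y)
    (hcoer : Filter.Tendsto (fun x : EuclideanSpace ℝ (Fin J) => f x / ‖x‖)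
      (Filter.comap norm Filter.atTop) Filter.atTop)
    (C : Set (EuclideanSpace ℝ (Fin J))) (hCne : C.Nonempty)
    (hCcp : IsCompact C) (hCU : C ⊆ U) :
    ConvexOn ℝ (domf - C) (thetaC f domf C) ↔ ∃ c, C = {c} := by
  have hsubU : U ⊆ domf := by rw [hdom]; exact interior_subset
  have hUopen : IsOpen U := by rw [hdom]; exact isOpen_interior
  constructor
  · -- forward direction
    intro hθ
    obtain ⟨c1, hc1⟩ := hCne
    refine ⟨c1, Set.eq_singleton_iff_unique_mem.mpr ⟨hc1, fun c2 hc2 => ?_⟩⟩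
    by_contra hne
    have hc1U : c1 ∈ U := hCU hc1
    have hc2U : c2 ∈ U := hCU hc2
    have hp_ne : f' c2 ≠ f' c1 := by
      intro h
      exact hne (grad_inj_aux hdom hconv hsconv hc2U hc1U (hf' c2 hc2U) (h ▸ hf' c1 hc1U))
    set v : EuclideanSpace ℝ (Fin J) := f' c2 - f' c1 with hv
    have hvne : v ≠ 0 := sub_ne_zero.mpr hp_ne
    -- the function g
    set g : ℝ → ℝ := fun t => f (c1 + t • v) + f (c2 + t • (-v)) - f c1 - f c2 with hg
    have hA := hasDerivAt_line_aux (hf' c1 hc1U) v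
    have hB := hasDerivAt_line_aux (hf' c2 hc2U) (-v)
    have hgd : HasDerivAt g (⟪f' c1, v⟫ + ⟪f' c2, -v⟫) 0 :=
      ((hA.add hB).sub_const (f c1)).sub_const (f c2)
    have hd_neg : ⟪f' c1, v⟫ + ⟪f' c2, -v⟫ < 0 := by
      have : ⟪f' c1, v⟫ + ⟪f' c2, -v⟫ = -⟪v, v⟫ := by
        rw [inner_neg_right, hv]
        rw [show f' c2 - f' c1 = -(f' c1 - f' c2) by abel] at *
        simp [inner_sub_left, inner_neg_left, inner_neg_right]
        rw [← real_inner_self_eq_norm_sq, ← inner_neg_left, ← inner_add_left, ← inner_neg_left, show -(f' c2 - f' c1) = f' c1 + -f' c2 by abel]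
      rw [this, neg_neg_iff_pos]
      refine lt_of_le_of_ne real_inner_self_nonneg (fun h => hvne ?_)
      exact real_inner_self_nonpos.mp (le_of_eq h.symm)
    have hslope : Filter.Tendsto (slope g 0) (nhdsWithin 0 {(0:ℝ)}ᶜ)
        (nhds (⟪f' c1, v⟫ + ⟪f' c2, -v⟫)) := hasDerivAt_iff_tendsto_slope.mp hgd
    have hslope' := hslope.mono_left
      (nhdsWithin_mono (0:ℝ) (fun t (ht : t ∈ Set.Ioi (0:ℝ)) => ne_of_gt ht))
    have ev1 : ∀ᶠ t in nhdsWithin (0:ℝ) (Set.Ioi 0), slope g 0 t < 0 :=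
      hslope'.eventually (Filter.Tendsto.eventually_lt_const hd_neg Filter.tendsto_id)
    have ev2 : ∀ᶠ t in nhds (0:ℝ), c1 + t • v ∈ U := by
      have hc : ContinuousAt (fun t : ℝ => c1 + t • v) 0 :=
        (continuous_const.add (continuous_id.smul continuous_const)).continuousAt
      apply hc.eventually_mem
      refine hUopen.mem_nhds ?_
      simpa using hc1U
    have ev3 : ∀ᶠ t in nhds (0:ℝ), c2 + t • (-v) ∈ U := by
      have hc : ContinuousAt (fun t : ℝ => c2 + t • (-v)) 0 :=
        (continuous_const.add (continuous_id.smul continuous_const)).continuousAt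
      apply hc.eventually_mem
      refine hUopen.mem_nhds ?_
      simpa using hc2U
    have ev4 : ∀ᶠ t in nhdsWithin (0:ℝ) (Set.Ioi 0), t ∈ Set.Ioi (0:ℝ) :=
      self_mem_nhdsWithin
    obtain ⟨t, hst, hm1, hm2, ht0⟩ :=
      (ev1.and ((ev2.filter_mono nhdsWithin_le_nhds).and
        ((ev3.filter_mono nhdsWithin_le_nhds).and ev4))).exists
    have ht0' : (0:ℝ) < t := ht0
    -- g t < 0
    have hg0 : g 0 = 0 := by simp [hg]
    have hgt_neg : g t < 0 := by
      have : slope g 0 t = g t / t := by rw [slope_def_field, hg0]; ring_nf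
      rw [this] at hst
      rcases div_neg_iff.mp hst with ⟨_, h⟩ | ⟨h, _⟩
      · linarith
      · exact h
    -- memberships in domf - C
    have hm1d : c1 + t • v ∈ domf := hsubU hm1
    have hm2d : c2 + t • (-v) ∈ domf := hsubU hm2
    have hamem : t • v ∈ domf - C := by
      rw [Set.mem_sub]
      exact ⟨c1 + t • v, hm1d, c1, hc1, by abel⟩
    have hbmem : -(t • v) ∈ domf - C := by
      rw [Set.mem_sub]
      exact ⟨c2 + t • (-v), hm2d, c2, hc2, by rw [smul_neg]; abel⟩
    -- BddBelow of the defining sets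
    obtain ⟨R, hR⟩ := hCcp.isBounded.exists_norm_le
    have hcont : ContinuousOn f U := fun u hu =>
      ((hf' u hu).hasFDerivAt.differentiableAt.continuousAt).continuousWithinAt
    obtain ⟨M, hM⟩ := (hCcp.image_of_continuousOn (hcont.mono hCU)).bddAbove
    have hbdd : ∀ x : EuclideanSpace ℝ (Fin J),
        BddBelow ((fun c => f (x + c) - f c) '' {c ∈ C | x + c ∈ domf}) := by
      intro x
      refine ⟨f c1 - ‖f' c1‖ * (‖x‖ + R + ‖c1‖) - M, ?_⟩
      rintro z ⟨c, ⟨hcC, hcd⟩, rfl⟩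
      have hgi := grad_ineq_aux hconv (hsubU hc1U) hcd (hf' c1 hc1U)
      have habs : |⟪f' c1, (x + c) - c1⟫| ≤ ‖f' c1‖ * ‖(x + c) - c1‖ :=
        abs_real_inner_le_norm _ _
      have hnorm : ‖(x + c) - c1‖ ≤ ‖x‖ + R + ‖c1‖ := by
        calc ‖(x + c) - c1‖ ≤ ‖x + c‖ + ‖c1‖ := norm_sub_le _ _
          _ ≤ ‖x‖ + ‖c‖ + ‖c1‖ := by linarith [norm_add_le x c]
          _ ≤ ‖x‖ + R + ‖c1‖ := by linarith [hR c hcC]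
      have hfcM : f c ≤ M := hM ⟨c, hcC, rfl⟩
      have hmul : ‖f' c1‖ * ‖(x + c) - c1‖ ≤ ‖f' c1‖ * (‖x‖ + R + ‖c1‖) :=
        mul_le_mul_of_nonneg_left hnorm (norm_nonneg _)
      have := abs_le.mp habs
      simp only
      linarith [this.1]
    -- θ(0) = 0
    have hθ0 : thetaC f domf C 0 = 0 := by
      have hset : {c ∈ C | (0 : EuclideanSpace ℝ (Fin J)) + c ∈ domf} = C := by
        ext c; simp only [Set.mem_setOf_eq, zero_add, Set.mem_sep_iff]
        exact ⟨fun h => h.1, fun h => ⟨h, hsubU (hCU h)⟩⟩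
      have hfun : (fun c : EuclideanSpace ℝ (Fin J) => f (0 + c) - f c) = fun _ => 0 := by
        funext c; simp
      unfold thetaC
      rw [hset, hfun, Set.Nonempty.image_const ⟨c1, hc1⟩ 0, csInf_singleton]
    -- θ bounds
    have hθa : thetaC f domf C (t • v) ≤ f (c1 + t • v) - f c1 := by
      apply csInf_le (hbdd _)
      exact ⟨c1, ⟨hc1, by rwa [add_comm]⟩, by rw [add_comm]⟩
    have hθb : thetaC f domf C (-(t • v)) ≤ f (c2 + t • (-v)) - f c2 := by
      apply csInf_le (hbdd _)
      refine ⟨c2, ⟨hc2, ?_⟩, ?_⟩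
      · show -(t • v) + c2 ∈ domf
        rw [show -(t • v) + c2 = c2 + t • (-v) by rw [smul_neg]; abel]; exact hm2d
      · show f (-(t • v) + c2) - f c2 = f (c2 + t • (-v)) - f c2
        rw [show -(t • v) + c2 = c2 + t • (-v) by rw [smul_neg]; abel]
    -- convexity contradiction
    have hcvx := hθ.2 hamem hbmem (by norm_num : (0:ℝ) ≤ 1/2) (by norm_num : (0:ℝ) ≤ 1/2)
      (by norm_num)
    have he : (1/2 : ℝ) • (t • v) + (1/2 : ℝ) • (-(t • v)) = 0 := by module
    rw [he, hθ0] at hcvx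
    simp only [smul_eq_mul] at hcvx
    have hgt' : f (c1 + t • v) - f c1 + (f (c2 + t • (-v)) - f c2) < 0 := by
      have : g t = f (c1 + t • v) + f (c2 + t • (-v)) - f c1 - f c2 := rfl
      linarith [hgt_neg]
    linarith
  · -- reverse direction
    rintro ⟨c, rfl⟩
    have hcU : c ∈ U := hCU rfl
    have hcd : c ∈ domf := hsubU hcU
    have hmem_iff : ∀ x : EuclideanSpace ℝ (Fin J), x ∈ domf - {c} → x + c ∈ domf := by
      intro x hx
      rw [Set.mem_sub] at hx
      obtain ⟨a, ha, b, hb, hab⟩ := hx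
      rw [Set.mem_singleton_iff] at hb
      subst hb
      rw [← hab, sub_add_cancel]
      exact ha
    have hval : ∀ x : EuclideanSpace ℝ (Fin J), x ∈ domf - {c} →
        thetaC f domf {c} x = f (x + c) - f c := by
      intro x hx
      have hxc : x + c ∈ domf := hmem_iff x hx
      have hset : {c' ∈ ({c} : Set (EuclideanSpace ℝ (Fin J))) | x + c' ∈ domf} = {c} := by
        ext c'; simp only [Set.mem_sep_iff, Set.mem_singleton_iff]
        exact ⟨fun h => h.1, fun h => ⟨h, h ▸ hxc⟩⟩
      unfold thetaC
      rw [hset, Set.image_singleton, csInf_singleton]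
    have hsetconv : Convex ℝ (domf - ({c} : Set (EuclideanSpace ℝ (Fin J)))) :=
      hconv.1.sub (convex_singleton c)
    refine ⟨hsetconv, ?_⟩
    intro x hx y hy a b ha hb hab
    have hxy : a • x + b • y ∈ domf - ({c} : Set (EuclideanSpace ℝ (Fin J))) :=
      hsetconv hx hy ha hb hab
    rw [hval _ hx, hval _ hy, hval _ hxy]
    have he : a • (x + c) + b • (y + c) = (a • x + b • y) + c := by
      have hc' : a • c + b • c = c := by rw [← add_smul, hab, one_smul]
      rw [smul_add, smul_add]
      rw [show a • x + a • c + (b • y + b • c) = a • x + b • y + (a • c + b • c) by abel, hc']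
    have hcv := hconv.2 (hmem_iff x hx) (hmem_iff y hy) ha hb hab
    rw [he] at hcv
    simp only [smul_eq_mul] at hcv ⊢
    have : a * f c + b * f c = f c := by rw [← add_mul, hab, one_mul]
    linarith
end

section
/- Let f be a Legendre function on ℝ^J with conjugate f*, and C ⊆ int dom f nonempty compact. Then for every y ∈ int dom f, the right Bregman farthest-point set of y (maximizers of c ↦ D_f(y,c) over C) equals ∇f* applied to the left Bregman farthest-point set of ∇f(y) in ∇f(C) with respect to D_{f*}; i.e., argmax_{c∈C} D_f(y,c) = ∇f*(argmax_{c*∈∇f(C)} D_{f*}(c*, ∇f(y))). -/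
open scoped RealInnerProductSpace

/-- Bregman distance for real-valued `f` with gradient `f'`. -/
noncomputable abbrev bregman {J : ℕ}
    (f : EuclideanSpace ℝ (Fin J) → ℝ) (f' : EuclideanSpace ℝ (Fin J) → EuclideanSpace ℝ (Fin J))
    (x y : EuclideanSpace ℝ (Fin J)) : ℝ :=
  f x - f y - ⟪f' y, x - y⟫

/-- For a Legendre function `f` with conjugate `f*`, the right Bregman farthest-point set
of `y ∈ int dom f` in `C` equals `∇f*` applied to the left Bregman farthest-point set of
`∇f(y)` in `∇f(C)` with respect to `D_{f*}`. -/
theorem right_farthest_eq_dual_left_farthest {J : ℕ}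
    (f : EuclideanSpace ℝ (Fin J) → ℝ) (U : Set (EuclideanSpace ℝ (Fin J)))
    (hU : IsOpen U) (hUne : U.Nonempty)
    (hconv : StrictConvexOn ℝ U f)
    (f' : EuclideanSpace ℝ (Fin J) → EuclideanSpace ℝ (Fin J))
    (hf' : ∀ y ∈ U, HasGradientAt f (f' y) y)
    -- `g = ∇f*` is the inverse of `∇f : U → int dom f*  (= f' '' U)`
    (g : EuclideanSpace ℝ (Fin J) → EuclideanSpace ℝ (Fin J))
    (hgl : ∀ y ∈ U, g (f' y) = y)
    -- the conjugate `f*`, determined on `f' '' U` by the Fenchel--Young equality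
    (fstar : EuclideanSpace ℝ (Fin J) → ℝ)
    (hFY : ∀ y ∈ U, fstar (f' y) = ⟪f' y, y⟫ - f y)
    (C : Set (EuclideanSpace ℝ (Fin J))) (hCne : C.Nonempty)
    (hCcp : IsCompact C) (hCU : C ⊆ U)
    (y : EuclideanSpace ℝ (Fin J)) (hy : y ∈ U) :
    {c ∈ C | ∀ d ∈ C, bregman f f' y d ≤ bregman f f' y c} =
      g '' {cs ∈ f' '' C | ∀ ds ∈ f' '' C,
        bregman fstar g ds (f' y) ≤ bregman fstar g cs (f' y)} := by
  have key : ∀ c ∈ U, bregman fstar g (f' c) (f' y) = bregman f f' y c := by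
    intro c hc
    simp only [bregman, hFY c hc, hFY y hy, hgl y hy, inner_sub_right]
    rw [real_inner_comm y (f' c), real_inner_comm y (f' y)]
    ring
  ext x
  constructor
  · rintro ⟨hxC, hmax⟩
    refine ⟨f' x, ⟨⟨x, hxC, rfl⟩, ?_⟩, hgl x (hCU hxC)⟩
    rintro ds ⟨d, hdC, rfl⟩
    rw [key d (hCU hdC), key x (hCU hxC)]
    exact hmax d hdC
  · rintro ⟨cs, ⟨⟨c, hcC, rfl⟩, hmax⟩, rfl⟩
    rw [hgl c (hCU hcC)]
    refine ⟨hcC, fun d hdC => ?_⟩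
    have := hmax (f' d) ⟨d, hdC, rfl⟩
    rwa [key d (hCU hdC), key c (hCU hcC)] at this
end
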